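/- arXiv:1606.07699 — 2 statements merged into one kernel-verified Lean document; each statement's English description precedes it below -/
import Mathlib

section
/- Let N ≥ 1 be a natural number and let φ ∈ ℂ[X,Y] be a nonzero binary form of degree N. Then 0 lies in the closure of the SL(2,ℂ)-orbit of φ in V_N if and only if there exist a nonzero linear form L ∈ ℂ[X,Y] and a natural number m with 2m > N such that L^m divides φ. -/
open MvPolynomial

/-- The substitution action of a `2 × 2` matrix `g = (a b; c d)` on binary forms:
`(φ·g)(X, Y) = φ (aX + bY, cX + dY)`. -/
noncomputable def substAct (g : Matrix (Fin 2) (Fin 2) ℂ) (φ : MvPolynomial (Fin 2) ℂ) :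
    MvPolynomial (Fin 2) ℂ :=
  aeval (fun i => C (g i 0) * X 0 + C (g i 1) * X 1) φ

/-- The coefficient vector of a polynomial, realizing the natural (coefficientwise)
topology on the finite-dimensional space of binary forms of degree `N`. -/
def toCoeff (φ : MvPolynomial (Fin 2) ℂ) : (Fin 2 →₀ ℕ) → ℂ := fun d => φ.coeff d

section Helpers

open Filter Topology

lemma substAct_substAct (A B : Matrix (Fin 2) (Fin 2) ℂ) (φ : MvPolynomial (Fin 2) ℂ) :
    substAct A (substAct B φ) = substAct (B * A) φ := by
  unfold substAct
  have h : ((aeval fun i : Fin 2 => C (A i 0) * X 0 + C (A i 1) * X 1).comp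
          (aeval fun i : Fin 2 => C (B i 0) * X 0 + C (B i 1) * X 1)
        : MvPolynomial (Fin 2) ℂ →ₐ[ℂ] MvPolynomial (Fin 2) ℂ)
      = aeval (fun i : Fin 2 => C ((B*A) i 0) * X 0 + C ((B*A) i 1) * X 1) := by
    rw [comp_aeval]
    congr 1
    funext i
    simp [Matrix.mul_apply, Fin.sum_univ_two, map_add, map_mul, aeval_X, aeval_C]
    ring
  exact (AlgHom.comp_apply _ _ φ).symm.trans (congrFun (congrArg DFunLike.coe h) φ)

lemma substAct_mul (g : Matrix (Fin 2) (Fin 2) ℂ) (p q : MvPolynomial (Fin 2) ℂ) :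
    substAct g (p * q) = substAct g p * substAct g q := by
  unfold substAct; exact map_mul _ _ _

lemma substAct_pow (g : Matrix (Fin 2) (Fin 2) ℂ) (p : MvPolynomial (Fin 2) ℂ) (m : ℕ) :
    substAct g (p ^ m) = substAct g p ^ m := by
  unfold substAct; exact map_pow _ _ _

lemma substAct_one (φ : MvPolynomial (Fin 2) ℂ) : substAct 1 φ = φ := by
  unfold substAct
  have h : (fun i : Fin 2 => C ((1 : Matrix (Fin 2) (Fin 2) ℂ) i 0) * X 0
      + C ((1 : Matrix (Fin 2) (Fin 2) ℂ) i 1) * X 1) = X := by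
    funext i
    fin_cases i <;> simp [Matrix.one_apply]
  rw [h]
  exact aeval_X_left_apply φ

lemma monomial_eq_two (u : Fin 2 →₀ ℕ) (a : ℂ) :
    (monomial u a : MvPolynomial (Fin 2) ℂ) = C a * X 0 ^ u 0 * X 1 ^ u 1 := by
  rw [monomial_eq, Finsupp.prod_fintype _ _ (fun i => pow_zero _), Fin.prod_univ_two, mul_assoc]

lemma substAct_monomial (g : Matrix (Fin 2) (Fin 2) ℂ) (u : Fin 2 →₀ ℕ) (a : ℂ) :
    substAct g (monomial u a) = C a * (C (g 0 0) * X 0 + C (g 0 1) * X 1) ^ u 0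
      * (C (g 1 0) * X 0 + C (g 1 1) * X 1) ^ u 1 := by
  unfold substAct
  rw [aeval_monomial, Finsupp.prod_fintype _ _ (fun i => pow_zero _), Fin.prod_univ_two,
    mul_assoc]
  rfl

lemma substAct_diagonal_monomial (v : Fin 2 → ℂ) (u : Fin 2 →₀ ℕ) (a : ℂ) :
    substAct (Matrix.diagonal v) (monomial u a) = monomial u (v 0 ^ u 0 * v 1 ^ u 1 * a) := by
  rw [substAct_monomial, monomial_eq_two]
  simp only [Matrix.diagonal_apply_eq, Matrix.diagonal_apply_ne, ne_eq, Fin.zero_eq_one_iff,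
    OfNat.ofNat_ne_one, not_false_eq_true, Matrix.diagonal_apply]
  norm_num
  simp only [mul_pow, ← C_pow, C_mul]
  ring

lemma coeff_substAct_diagonal (v : Fin 2 → ℂ) (φ : MvPolynomial (Fin 2) ℂ) (d : Fin 2 →₀ ℕ) :
    coeff d (substAct (Matrix.diagonal v) φ) = v 0 ^ d 0 * v 1 ^ d 1 * coeff d φ := by
  induction φ using MvPolynomial.induction_on' with
  | monomial u a =>
    rw [substAct_diagonal_monomial, coeff_monomial, coeff_monomial]
    by_cases h : u = d
    · subst h; simp
    · simp [h]
  | add p q hp hq =>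
    unfold substAct at *
    rw [map_add, coeff_add, coeff_add, hp, hq]
    ring

lemma substAct_isHomogeneous {φ : MvPolynomial (Fin 2) ℂ} {N : ℕ}
    (hφ : φ.IsHomogeneous N) (g : Matrix (Fin 2) (Fin 2) ℂ) :
    (substAct g φ).IsHomogeneous N := by
  have := hφ.aeval (fun i => C (g i 0) * X 0 + C (g i 1) * X 1 : Fin 2 → MvPolynomial (Fin 2) ℂ)
    (fun i => ((isHomogeneous_C_mul_X (g i 0) 0).add (isHomogeneous_C_mul_X (g i 1) 1)))
  unfold substAct
  simpa only [one_mul] using this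

lemma X_pow_dvd_iff' (χ : MvPolynomial (Fin 2) ℂ) (m : ℕ) (i : Fin 2) :
    (X i : MvPolynomial (Fin 2) ℂ) ^ m ∣ χ ↔ ∀ d ∈ χ.support, m ≤ d i := by
  rw [X_pow_eq_monomial, monomial_one_dvd_iff_modMonomial_eq_zero]
  constructor
  · intro h d hd
    by_contra hc
    have hne : ¬ Finsupp.single i m ≤ d := by
      rw [Finsupp.single_le_iff]; exact hc
    have := coeff_modMonomial_of_not_le χ hne
    rw [h] at this
    simp only [coeff_zero] at this
    exact (mem_support_iff.mp hd) this.symm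
  · intro h
    ext d
    by_cases hle : Finsupp.single i m ≤ d
    · rw [coeff_modMonomial_of_le χ hle]; simp
    · rw [coeff_modMonomial_of_not_le χ hle, coeff_zero]
      by_contra hc
      exact hle (Finsupp.single_le_iff.mpr (h d (mem_support_iff.mpr hc)))

lemma substAct_eq_sum (g : Matrix (Fin 2) (Fin 2) ℂ) (ψ : MvPolynomial (Fin 2) ℂ)
    (S : Finset (Fin 2 →₀ ℕ)) (hS : ψ.support ⊆ S) :
    substAct g ψ = ∑ e ∈ S, C (coeff e ψ) * substAct g (monomial e 1) := by
  have h1 : substAct g ψ = ∑ e ∈ ψ.support, C (coeff e ψ) * substAct g (monomial e 1) := by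
    conv_lhs => rw [ψ.as_sum]
    unfold substAct
    rw [map_sum]
    refine Finset.sum_congr rfl fun e _ => ?_
    rw [show (monomial e (coeff e ψ)) = C (coeff e ψ) * monomial e 1 by
      rw [C_mul_monomial, mul_one], map_mul, aeval_C]
    rfl
  rw [h1]
  refine Finset.sum_subset hS fun e _ he => ?_
  rw [notMem_support_iff.mp he]
  simp

lemma coeff_substAct_continuous (φ : MvPolynomial (Fin 2) ℂ) :
    ∀ d, Continuous fun g : Matrix (Fin 2) (Fin 2) ℂ => coeff d (substAct g φ) := by
  induction φ using MvPolynomial.induction_on with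
  | C a =>
    intro d
    unfold substAct
    simp only [aeval_C]
    exact continuous_const
  | add p q hp hq =>
    intro d
    unfold substAct at *
    simp only [map_add, coeff_add]
    exact (hp d).add (hq d)
  | mul_X p i hp =>
    intro d
    have key : ∀ g : Matrix (Fin 2) (Fin 2) ℂ, coeff d (substAct g (p * X i))
        = g i 0 * (if (0 : Fin 2) ∈ d.support then coeff (d - Finsupp.single 0 1) (substAct g p) else 0)
        + g i 1 * (if (1 : Fin 2) ∈ d.support then coeff (d - Finsupp.single 1 1) (substAct g p) else 0) := by
      intro g
      have : substAct g (p * X i) = C (g i 0) * (substAct g p * X 0) + C (g i 1) * (substAct g p * X 1) := by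
        unfold substAct
        rw [map_mul, aeval_X]
        ring
      rw [this, coeff_add, coeff_C_mul, coeff_C_mul, coeff_mul_X', coeff_mul_X']
    simp only [key]
    apply Continuous.add
    · apply Continuous.mul (continuous_id.matrix_elem i 0)
      split_ifs
      · exact hp _
      · exact continuous_const
    · apply Continuous.mul (continuous_id.matrix_elem i 1)
      split_ifs
      · exact hp _
      · exact continuous_const

open Matrix in
lemma svd2 (g : Matrix (Fin 2) (Fin 2) ℂ) (hg : g.det = 1) :
    ∃ (U W : Matrix (Fin 2) (Fin 2) ℂ) (s : Fin 2 → ℝ),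
      star U * U = 1 ∧ U * star U = 1 ∧ star W * W = 1 ∧ W * star W = 1 ∧
      (∀ i, 0 < s i) ∧ s 0 * s 1 = 1 ∧ g = U * Matrix.diagonal (fun i => (s i : ℂ)) * W := by
  have hH : (gᴴ * g).IsHermitian := isHermitian_conjTranspose_mul_self g
  have hnn : ∀ i, 0 ≤ hH.eigenvalues i := fun i =>
    eigenvalues_conjTranspose_mul_self_nonneg g i
  have hdet : (gᴴ * g).det = 1 := by
    rw [det_mul, det_conjTranspose, hg]; simp
  have hprod : hH.eigenvalues 0 * hH.eigenvalues 1 = 1 := by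
    have h2 := hH.det_eq_prod_eigenvalues
    rw [hdet, Fin.prod_univ_two, ← RCLike.ofReal_mul] at h2
    exact RCLike.ofReal_inj.mp (h2.symm.trans RCLike.ofReal_one.symm)
  set lam := hH.eigenvalues with hlam
  have hne : lam 0 ≠ 0 ∧ lam 1 ≠ 0 := mul_ne_zero_iff.mp (by rw [hprod]; exact one_ne_zero)
  have hpos : ∀ i, 0 < lam i := by
    intro i
    refine (hnn i).lt_of_ne (Ne.symm ?_)
    fin_cases i
    · exact hne.1
    · exact hne.2
  set s : Fin 2 → ℝ := fun i => Real.sqrt (lam i) with hs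
  have hspos : ∀ i, 0 < s i := fun i => Real.sqrt_pos.mpr (hpos i)
  have hsprod : s 0 * s 1 = 1 := by
    show Real.sqrt (lam 0) * Real.sqrt (lam 1) = 1
    rw [← Real.sqrt_mul (hnn 0), hprod, Real.sqrt_one]
  have hss : ∀ i, s i * s i = lam i := fun i => Real.mul_self_sqrt (hpos i).le
  set V : Matrix (Fin 2) (Fin 2) ℂ := (hH.eigenvectorUnitary : Matrix (Fin 2) (Fin 2) ℂ) with hV
  have hVmem := hH.eigenvectorUnitary.2
  have hV1 : star V * V = 1 := mem_unitaryGroup_iff'.mp hVmem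
  have hV2 : V * star V = 1 := mem_unitaryGroup_iff.mp hVmem
  have hspec : gᴴ * g = V * diagonal (RCLike.ofReal ∘ lam) * star V := hH.spectral_theorem
  set D : Matrix (Fin 2) (Fin 2) ℂ := diagonal (fun i => (s i : ℂ)) with hD
  set Dinv : Matrix (Fin 2) (Fin 2) ℂ := diagonal (fun i => ((s i : ℝ) : ℂ)⁻¹) with hDinv
  have hDD : Dinv * D = 1 := by
    rw [hD, hDinv, diagonal_mul_diagonal]
    rw [show (fun i => ((s i : ℝ) : ℂ)⁻¹ * ((s i : ℝ) : ℂ)) = fun _ => (1:ℂ) from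
      funext fun i => inv_mul_cancel₀ (by exact_mod_cast (hspos i).ne')]
    exact diagonal_one
  have hDD' : D * Dinv = 1 := by
    rw [hD, hDinv, diagonal_mul_diagonal]
    rw [show (fun i => ((s i : ℝ) : ℂ) * ((s i : ℝ) : ℂ)⁻¹) = fun _ => (1:ℂ) from
      funext fun i => mul_inv_cancel₀ (by exact_mod_cast (hspos i).ne')]
    exact diagonal_one
  have hfun : (fun i => ((s i : ℝ) : ℂ) * ((s i : ℝ):ℂ)) = (RCLike.ofReal ∘ lam) := by
    funext i
    rw [Function.comp_apply, ← Complex.ofReal_mul, hss i]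
    rfl
  have hDlam : D * D = diagonal (RCLike.ofReal ∘ lam) := by
    rw [hD, diagonal_mul_diagonal, hfun]
  have hDstar : star Dinv = Dinv := by
    have hsi : (star fun i => ((s i : ℝ) : ℂ)⁻¹) = fun i => ((s i : ℝ) : ℂ)⁻¹ := by
      funext i
      simp only [Pi.star_apply, star_inv₀, RCLike.star_def, Complex.conj_ofReal]
    rw [hDinv, star_eq_conjTranspose, diagonal_conjTranspose, hsi]
  set U : Matrix (Fin 2) (Fin 2) ℂ := g * V * Dinv with hU
  have hU1 : star U * U = 1 := by
    calc star U * U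
        = Dinv * (star V * (gᴴ * g) * V) * Dinv := by
          rw [hU, StarMul.star_mul, StarMul.star_mul, hDstar, star_eq_conjTranspose g]
          simp only [Matrix.mul_assoc]
      _ = Dinv * (star V * (V * diagonal (RCLike.ofReal ∘ lam) * star V) * V) * Dinv := by
          rw [hspec]
      _ = Dinv * ((star V * V) * diagonal (RCLike.ofReal ∘ lam) * (star V * V)) * Dinv := by
          simp only [Matrix.mul_assoc]
      _ = Dinv * (D * D) * Dinv := by rw [hV1, ← hDlam]; simp
      _ = (Dinv * D) * (D * Dinv) := by simp only [Matrix.mul_assoc]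
      _ = 1 := by rw [hDD, hDD', Matrix.one_mul]
  have hU2 : U * star U = 1 := mul_eq_one_comm.mp hU1
  refine ⟨U, star V, s, hU1, hU2, by rw [star_star]; exact hV2, by rw [star_star]; exact hV1,
    hspos, hsprod, ?_⟩
  rw [hU]
  calc g = g * V * 1 * star V := by rw [Matrix.mul_one, Matrix.mul_assoc, hV2, Matrix.mul_one]
    _ = g * V * (Dinv * D) * star V := by rw [hDD]
    _ = g * V * Dinv * D * star V := by simp only [Matrix.mul_assoc]

lemma ultra_lim {E : Type*} [NormedAddCommGroup E] [ProperSpace E]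
    (𝒰 : Ultrafilter ℕ) (x : ℕ → E) (C : ℝ)
    (h : ∀ᶠ k in (𝒰 : Filter ℕ), ‖x k‖ ≤ C) : ∃ a, Tendsto x 𝒰 (𝓝 a) := by
  have hc : IsCompact (Metric.closedBall (0:E) C) := isCompact_closedBall _ _
  have hmem : (𝒰.map x : Filter E) ≤ Filter.principal (Metric.closedBall (0:E) C) := by
    rw [Filter.le_principal_iff, Ultrafilter.coe_map, Filter.mem_map]
    filter_upwards [h] with k hk
    simpa [Metric.mem_closedBall, dist_eq_norm] using hk
  obtain ⟨a, -, ha⟩ := hc.ultrafilter_le_nhds (𝒰.map x) hmem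
  exact ⟨a, by rwa [Ultrafilter.coe_map] at ha⟩

lemma entry_bound (U : Matrix (Fin 2) (Fin 2) ℂ) (h : star U * U = 1) (i j : Fin 2) :
    ‖U i j‖ ≤ 1 := by
  have h1 : (star U * U) j j = 1 := by rw [h]; simp [Matrix.one_apply]
  rw [Matrix.mul_apply, Fin.sum_univ_two, Matrix.star_apply, Matrix.star_apply] at h1
  have h2 : Complex.normSq (U 0 j) + Complex.normSq (U 1 j) = 1 := by
    have := congrArg Complex.re h1
    simpa [Complex.star_def, Complex.normSq_apply, Complex.mul_re, Complex.one_re] using this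
  have hn : ∀ k : Fin 2, Complex.normSq (U k j) = ‖U k j‖^2 := fun k => by
    rw [Complex.normSq_eq_norm_sq]
  rw [hn 0, hn 1] at h2
  have h0 : (0:ℝ) ≤ ‖U 0 j‖ := norm_nonneg _
  have h1' : (0:ℝ) ≤ ‖U 1 j‖ := norm_nonneg _
  fin_cases i
  · show ‖U 0 j‖ ≤ 1
    nlinarith
  · show ‖U 1 j‖ ≤ 1
    nlinarith

lemma tendsto_entry_mul {α : Type*} {l : Filter α} {A B : α → Matrix (Fin 2) (Fin 2) ℂ}
    {A' B' : Matrix (Fin 2) (Fin 2) ℂ}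
    (hA : ∀ i j, Tendsto (fun k => A k i j) l (𝓝 (A' i j)))
    (hB : ∀ i j, Tendsto (fun k => B k i j) l (𝓝 (B' i j))) (i j : Fin 2) :
    Tendsto (fun k => (A k * B k) i j) l (𝓝 ((A' * B') i j)) := by
  simp only [Matrix.mul_apply, Fin.sum_univ_two]
  exact ((hA i 0).mul (hB 0 j)).add ((hA i 1).mul (hB 1 j))

lemma tendsto_matrix_of_entries {l : Filter ℕ} {A : ℕ → Matrix (Fin 2) (Fin 2) ℂ}
    {A' : Matrix (Fin 2) (Fin 2) ℂ}
    (h : ∀ i j, Tendsto (fun n => A n i j) l (𝓝 (A' i j))) : Tendsto A l (𝓝 A') := by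
  apply tendsto_pi_nhds.mpr
  intro i
  rw [tendsto_pi_nhds]
  exact fun j => h i j

lemma degree_two (d : Fin 2 →₀ ℕ) : d.degree = d 0 + d 1 := by
  rw [Finsupp.degree_apply, Finset.sum_subset (Finset.subset_univ _)
    (fun i _ hi => Finsupp.notMem_support_iff.mp hi)]
  exact Fin.sum_univ_two d

lemma mem_support_deg {φ : MvPolynomial (Fin 2) ℂ} {N : ℕ} (hhom : φ.IsHomogeneous N)
    {d : Fin 2 →₀ ℕ} (hd : d ∈ φ.support) : d 0 + d 1 = N := by
  by_contra h
  exact mem_support_iff.mp hd (hhom.coeff_eq_zero (by rwa [degree_two]))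

lemma linear_form_eq {L : MvPolynomial (Fin 2) ℂ} (hL1 : L.IsHomogeneous 1) :
    L = C (coeff (Finsupp.single 0 1) L) * X 0 + C (coeff (Finsupp.single 1 1) L) * X 1 := by
  ext d
  rw [coeff_add, coeff_C_mul, coeff_C_mul, coeff_X', coeff_X']
  by_cases hd : d ∈ L.support
  · have hdeg := mem_support_deg hL1 hd
    have : d = Finsupp.single 0 1 ∨ d = Finsupp.single 1 1 := by
      rcases (by omega : d 0 = 1 ∧ d 1 = 0 ∨ d 0 = 0 ∧ d 1 = 1) with ⟨h0, h1⟩ | ⟨h0, h1⟩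
      · left; ext i; fin_cases i <;> simp [h0, h1, Finsupp.single_apply]
      · right; ext i; fin_cases i <;> simp [h0, h1, Finsupp.single_apply]
    have hne : Finsupp.single (0 : Fin 2) (1:ℕ) ≠ Finsupp.single 1 1 := by
      intro h
      have := congrFun (congrArg (DFunLike.coe) h) 0
      simp [Finsupp.single_apply] at this
    rcases this with h | h <;> subst h <;> simp [hne, hne.symm, Ne.symm]
  · rw [notMem_support_iff.mp hd]
    split_ifs with h1 h2 h2
    · exfalso
      have := congrFun (congrArg (DFunLike.coe) (h1.trans h2.symm)) 0
      simp [Finsupp.single_apply] at this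
    · rw [← h1] at hd
      rw [notMem_support_iff.mp hd]; ring
    · rw [← h2] at hd
      rw [notMem_support_iff.mp hd]; ring
    · ring

lemma substAct_linear (a b : ℂ) (hab : ¬(a = 0 ∧ b = 0)) :
    ∃ g : Matrix (Fin 2) (Fin 2) ℂ, g.det = 1 ∧
      substAct g (C a * X 0 + C b * X 1) = X 0 := by
  have key : ∀ g : Matrix (Fin 2) (Fin 2) ℂ, substAct g (C a * X 0 + C b * X 1)
      = C (a * g 0 0 + b * g 1 0) * X 0 + C (a * g 0 1 + b * g 1 1) * X 1 := by
    intro g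
    unfold substAct
    rw [map_add, map_mul, map_mul, aeval_C, aeval_C, aeval_X, aeval_X]
    simp only [map_add, map_mul, algebraMap_eq]
    ring
  by_cases ha : a = 0
  · have hb : b ≠ 0 := fun h => hab ⟨ha, h⟩
    refine ⟨!![0, -b; b⁻¹, 0], ?_, ?_⟩
    · simp [Matrix.det_fin_two_of, hb]
    · rw [key]
      have e00 : (!![0, -b; b⁻¹, 0] : Matrix (Fin 2) (Fin 2) ℂ) 0 0 = 0 := rfl
      have e01 : (!![0, -b; b⁻¹, 0] : Matrix (Fin 2) (Fin 2) ℂ) 0 1 = -b := rfl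
      have e10 : (!![0, -b; b⁻¹, 0] : Matrix (Fin 2) (Fin 2) ℂ) 1 0 = b⁻¹ := rfl
      have e11 : (!![0, -b; b⁻¹, 0] : Matrix (Fin 2) (Fin 2) ℂ) 1 1 = 0 := rfl
      rw [e00, e01, e10, e11, show a * 0 + b * b⁻¹ = 1 by rw [mul_inv_cancel₀ hb]; ring,
        show a * (-b) + b * 0 = 0 by rw [ha]; ring]
      simp
  · refine ⟨!![a⁻¹, -b; 0, a], ?_, ?_⟩
    · simp [Matrix.det_fin_two_of, inv_mul_cancel₀ ha]
    · rw [key]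
      have e00 : (!![a⁻¹, -b; 0, a] : Matrix (Fin 2) (Fin 2) ℂ) 0 0 = a⁻¹ := rfl
      have e01 : (!![a⁻¹, -b; 0, a] : Matrix (Fin 2) (Fin 2) ℂ) 0 1 = -b := rfl
      have e10 : (!![a⁻¹, -b; 0, a] : Matrix (Fin 2) (Fin 2) ℂ) 1 0 = 0 := rfl
      have e11 : (!![a⁻¹, -b; 0, a] : Matrix (Fin 2) (Fin 2) ℂ) 1 1 = a := rfl
      rw [e00, e01, e10, e11, show a * a⁻¹ + b * 0 = 1 by rw [mul_inv_cancel₀ ha]; ring,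
        show a * (-b) + b * a = 0 by ring]
      simp

lemma coeff_linear (a b : ℂ) (k : Fin 2) :
    coeff (Finsupp.single k 1) (C a * X 0 + C b * X 1 : MvPolynomial (Fin 2) ℂ)
      = if k = 0 then a else b := by
  have hne : Finsupp.single (0 : Fin 2) (1:ℕ) ≠ Finsupp.single 1 1 := by
    intro h
    have := congrFun (congrArg (DFunLike.coe) h) 0
    simp [Finsupp.single_apply] at this
  fin_cases k
  · rw [coeff_add, coeff_C_mul, coeff_C_mul, coeff_X', coeff_X']
    simp [hne.symm, Ne.symm]
  · rw [coeff_add, coeff_C_mul, coeff_C_mul, coeff_X', coeff_X']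
    simp [hne, Ne.symm]

lemma forward_core (N : ℕ) (φ : MvPolynomial (Fin 2) ℂ) (hhom : φ.IsHomogeneous N)
    (𝒰 : Ultrafilter ℕ)
    (g U W : ℕ → Matrix (Fin 2) (Fin 2) ℂ) (s : ℕ → Fin 2 → ℝ)
    (hU1 : ∀ n, star (U n) * U n = 1)
    (hW1 : ∀ n, star (W n) * W n = 1) (hW2 : ∀ n, W n * star (W n) = 1)
    (hspos : ∀ n i, 0 < s n i)
    (hgeq : ∀ n, g n = U n * Matrix.diagonal (fun i => ((s n i : ℝ) : ℂ)) * W n)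
    (hcoeff : ∀ d, Tendsto (fun n => coeff d (substAct (g n) φ)) (𝒰 : Filter ℕ) (𝓝 0))
    (i₀ i₁ : Fin 2)
    (hswapR : ∀ (x : Fin 2 → ℝ) (d : Fin 2 →₀ ℕ), x 0 ^ d 0 * x 1 ^ d 1 = x i₀ ^ d i₀ * x i₁ ^ d i₁)
    (hswapN : ∀ d : Fin 2 →₀ ℕ, d 0 + d 1 = d i₀ + d i₁)
    (hsio : ∀ n, s n i₀ * s n i₁ = 1)
    (hbig : ∀ᶠ n in (𝒰 : Filter ℕ), s n i₀ ≤ s n i₁) :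
    ∃ (L : MvPolynomial (Fin 2) ℂ) (m : ℕ),
      L ≠ 0 ∧ L.IsHomogeneous 1 ∧ 2 * m > N ∧ L ^ m ∣ φ := by
  -- ultralimits of the unitary parts
  have hUlim : ∀ i j, ∃ a, Tendsto (fun n => U n i j) (𝒰 : Filter ℕ) (𝓝 a) := fun i j =>
    ultra_lim 𝒰 _ 1 (Filter.Eventually.of_forall fun n => entry_bound (U n) (hU1 n) i j)
  choose Uf hUf using hUlim
  set Uinf : Matrix (Fin 2) (Fin 2) ℂ := Matrix.of Uf with hUinfdef
  have hUent : ∀ i j, Tendsto (fun n => U n i j) (𝒰 : Filter ℕ) (𝓝 (Uinf i j)) := hUf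
  have hWlim : ∀ i j, ∃ a, Tendsto (fun n => W n i j) (𝒰 : Filter ℕ) (𝓝 a) := fun i j =>
    ultra_lim 𝒰 _ 1 (Filter.Eventually.of_forall fun n => entry_bound (W n) (hW1 n) i j)
  choose Wf hWf using hWlim
  set Winf : Matrix (Fin 2) (Fin 2) ℂ := Matrix.of Wf with hWinfdef
  have hWstar : ∀ i j, Tendsto (fun n => (star (W n)) i j) (𝒰 : Filter ℕ)
      (𝓝 ((star Winf) i j)) := by
    intro i j
    simp only [Matrix.star_apply]
    exact (hWf j i).star
  have hUstar : ∀ i j, Tendsto (fun n => (star (U n)) i j) (𝒰 : Filter ℕ)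
      (𝓝 ((star Uinf) i j)) := by
    intro i j
    simp only [Matrix.star_apply]
    exact (hUf j i).star
  -- the limit of U n is unitary
  have hUinf1 : star Uinf * Uinf = 1 := by
    ext i j
    refine tendsto_nhds_unique (tendsto_entry_mul hUstar hUent i j) ?_
    simp only [hU1]
    exact tendsto_const_nhds
  have hUinf2 : Uinf * star Uinf = 1 := mul_eq_one_comm.mp hUinf1
  -- χ and its coefficient limits
  set χ := substAct Uinf φ with hχ
  have hχk : ∀ d, Tendsto (fun n => coeff d (substAct (U n) φ)) (𝒰 : Filter ℕ)
      (𝓝 (coeff d χ)) := fun d =>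
    ((coeff_substAct_continuous φ d).tendsto Uinf).comp (tendsto_matrix_of_entries hUent)
  set D : ℕ → Matrix (Fin 2) (Fin 2) ℂ :=
    fun n => Matrix.diagonal (fun i => ((s n i : ℝ) : ℂ)) with hD
  have hUD : ∀ n, g n * star (W n) = U n * D n := by
    intro n
    rw [hgeq n, Matrix.mul_assoc, Matrix.mul_assoc, hW2 n, Matrix.mul_one]
  -- the support finset for degree N
  set SN : Finset (Fin 2 →₀ ℕ) :=
    (Finset.range (N+1)).image (fun i => Finsupp.single 0 i + Finsupp.single 1 (N - i)) with hSN
  have hsuppSN : ∀ ψ : MvPolynomial (Fin 2) ℂ, ψ.IsHomogeneous N → ψ.support ⊆ SN := by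
    intro ψ hψ d hd
    have h1 := mem_support_deg hψ hd
    rw [hSN, Finset.mem_image]
    refine ⟨d 0, Finset.mem_range.mpr (by omega), ?_⟩
    ext i
    fin_cases i <;> simp [Finsupp.single_apply] <;> omega
  -- the U·D coefficients tend to zero
  have hψ'0 : ∀ d, Tendsto (fun n => coeff d (substAct (U n * D n) φ)) (𝒰 : Filter ℕ)
      (𝓝 0) := by
    intro d
    have hrw : ∀ n, coeff d (substAct (U n * D n) φ)
        = ∑ e ∈ SN, coeff e (substAct (g n) φ)
            * coeff d (substAct (star (W n)) (monomial e 1)) := by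
      intro n
      rw [← hUD n, ← substAct_substAct,
        substAct_eq_sum (star (W n)) _ SN (hsuppSN _ (substAct_isHomogeneous hhom (g n)))]
      rw [coeff_sum]
      exact Finset.sum_congr rfl fun e _ => by rw [coeff_C_mul]
    simp only [hrw]
    have hsum := tendsto_finset_sum SN (fun e (_ : e ∈ SN) => (hcoeff e).mul
      (((coeff_substAct_continuous (monomial e 1) d).tendsto (star Winf)).comp
        (tendsto_matrix_of_entries hWstar)))
    simpa using hsum
  -- factorization of coefficients through the diagonal
  have hfac : ∀ n d, coeff d (substAct (U n * D n) φ)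
      = ((s n 0 : ℝ) : ℂ) ^ d 0 * ((s n 1 : ℝ) : ℂ) ^ d 1
          * coeff d (substAct (U n) φ) := by
    intro n d
    rw [← substAct_substAct]
    simp only [hD]
    rw [coeff_substAct_diagonal]
  -- vanishing of the low coefficients of χ
  have hvanish : ∀ d : Fin 2 →₀ ℕ, d i₀ ≤ d i₁ → coeff d χ = 0 := by
    intro d hdle
    have hnorm : ∀ᶠ n in (𝒰 : Filter ℕ), ‖coeff d (substAct (U n) φ)‖
        ≤ ‖coeff d (substAct (U n * D n) φ)‖ := by
      filter_upwards [hbig] with n hb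
      have heq : ‖coeff d (substAct (U n * D n) φ)‖
          = (s n 0 ^ d 0 * s n 1 ^ d 1) * ‖coeff d (substAct (U n) φ)‖ := by
        rw [hfac n d, norm_mul, norm_mul, norm_pow, norm_pow, Complex.norm_real,
          Complex.norm_real, Real.norm_of_nonneg (hspos n 0).le,
          Real.norm_of_nonneg (hspos n 1).le]
      rw [heq]
      have hi1 : 1 ≤ s n i₁ := by nlinarith [hspos n i₀, hspos n i₁, hsio n]
      have h2 : 1 ≤ s n 0 ^ d 0 * s n 1 ^ d 1 := by
        rw [hswapR (s n) d]
        calc (1:ℝ) ≤ s n i₁ ^ (d i₁ - d i₀) := one_le_pow₀ hi1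
          _ = 1 ^ d i₀ * s n i₁ ^ (d i₁ - d i₀) := by ring
          _ = (s n i₀ * s n i₁) ^ d i₀ * s n i₁ ^ (d i₁ - d i₀) := by rw [hsio n]
          _ = s n i₀ ^ d i₀ * (s n i₁ ^ d i₀ * s n i₁ ^ (d i₁ - d i₀)) := by
              rw [mul_pow]; ring
          _ = s n i₀ ^ d i₀ * s n i₁ ^ d i₁ := by
              rw [← pow_add]
              congr 2
              omega
      exact le_mul_of_one_le_left (norm_nonneg _) h2
    have hc0 : Tendsto (fun n => coeff d (substAct (U n) φ)) (𝒰 : Filter ℕ) (𝓝 0) := by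
      refine tendsto_zero_iff_norm_tendsto_zero.mpr ?_
      refine squeeze_zero' (Filter.Eventually.of_forall fun n => norm_nonneg _) hnorm ?_
      simpa using (hψ'0 d).norm
    exact tendsto_nhds_unique (hχk d) hc0
  -- the support of χ lives in high powers of X i₀
  have hsup : ∀ d ∈ χ.support, N / 2 + 1 ≤ d i₀ := by
    intro d hd
    have hdeg : d 0 + d 1 = N := mem_support_deg (substAct_isHomogeneous hhom Uinf) hd
    have hdeg' : d i₀ + d i₁ = N := by rw [← hswapN d]; exact hdeg
    have hlt : d i₁ < d i₀ := by
      by_contra hcon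
      exact mem_support_iff.mp hd (hvanish d (by omega))
    omega
  have hXdvd : (X i₀ : MvPolynomial (Fin 2) ℂ) ^ (N / 2 + 1) ∣ χ :=
    (X_pow_dvd_iff' χ _ i₀).mpr hsup
  -- pull everything back by star Uinf
  have hφeq : φ = substAct (star Uinf) χ := by
    rw [hχ, substAct_substAct, hUinf2, substAct_one]
  have hLform : substAct (star Uinf) (X i₀)
      = C ((star Uinf) i₀ 0) * X 0 + C ((star Uinf) i₀ 1) * X 1 := by
    unfold substAct
    rw [aeval_X]
  refine ⟨substAct (star Uinf) (X i₀), N / 2 + 1, ?_, ?_, by omega, ?_⟩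
  · rw [hLform]
    intro hL0
    have hc1 : (star Uinf) i₀ 0 = 0 := by
      have := congrArg (coeff (Finsupp.single 0 1)) hL0
      rw [coeff_linear] at this
      simpa using this
    have hc2 : (star Uinf) i₀ 1 = 0 := by
      have := congrArg (coeff (Finsupp.single 1 1)) hL0
      rw [coeff_linear] at this
      simpa using this
    have h11 : (star Uinf * Uinf) i₀ i₀ = 1 := by rw [hUinf1]; simp [Matrix.one_apply]
    rw [Matrix.mul_apply, Fin.sum_univ_two, hc1, hc2] at h11
    simp at h11
  · rw [hLform]
    exact (isHomogeneous_C_mul_X _ 0).add (isHomogeneous_C_mul_X _ 1)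
  · rw [hφeq]
    have hd2 : substAct (star Uinf) (X i₀ ^ (N / 2 + 1)) ∣ substAct (star Uinf) χ := by
      obtain ⟨ρ, hρ⟩ := hXdvd
      exact ⟨substAct (star Uinf) ρ, by rw [hρ, substAct_mul]⟩
    rwa [substAct_pow] at hd2

end Helpers

/-- A nonzero binary form `φ` of degree `N ≥ 1` has `0` in the closure of its
`SL(2,ℂ)`-orbit if and only if some nonzero linear form `L` divides `φ` with `L ^ m ∣ φ`
for some `m` with `2m > N` (instability in the GIT sense). -/
theorem zero_mem_closure_orbit_iff (N : ℕ) (hN : 1 ≤ N) (φ : MvPolynomial (Fin 2) ℂ)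
    (hφ : φ ≠ 0) (hhom : φ.IsHomogeneous N) :
    (0 : (Fin 2 →₀ ℕ) → ℂ) ∈
      closure (toCoeff '' {ψ | ∃ g : Matrix.SpecialLinearGroup (Fin 2) ℂ,
        ψ = substAct (g : Matrix (Fin 2) (Fin 2) ℂ) φ}) ↔
    ∃ (L : MvPolynomial (Fin 2) ℂ) (m : ℕ),
      L ≠ 0 ∧ L.IsHomogeneous 1 ∧ 2 * m > N ∧ L ^ m ∣ φ := by
  constructor
  · intro h
    -- extract a sequence in the orbit converging to zero
    obtain ⟨x, hxmem, hxlim⟩ := mem_closure_iff_seq_limit.mp h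
    choose ψn hψS hψx using hxmem
    choose G hG using hψS
    set g : ℕ → Matrix (Fin 2) (Fin 2) ℂ := fun n => (G n : Matrix (Fin 2) (Fin 2) ℂ) with hgdef
    have hdet : ∀ n, (g n).det = 1 := fun n => (G n).2
    have hcoeff0 : ∀ d, Filter.Tendsto (fun n => coeff d (substAct (g n) φ))
        Filter.atTop (nhds 0) := by
      intro d
      have h1 := (tendsto_pi_nhds.mp hxlim) d
      simp only [Pi.zero_apply] at h1
      have he : ∀ n, x n d = coeff d (substAct (g n) φ) := by
        intro n
        rw [← hψx n, hG n]
        rfl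
      exact h1.congr he
    set 𝒰 : Ultrafilter ℕ := Ultrafilter.of Filter.atTop with h𝒰def
    have h𝒰le : (𝒰 : Filter ℕ) ≤ Filter.atTop := Ultrafilter.of_le _
    have hcoeffU : ∀ d, Filter.Tendsto (fun n => coeff d (substAct (g n) φ))
        (𝒰 : Filter ℕ) (nhds 0) := fun d => (hcoeff0 d).mono_left h𝒰le
    choose U W s hU1 hU2 hW1 hW2 hspos hsprod hgeq using fun n => svd2 (g n) (hdet n)
    by_cases hA : {n | s n 0 ≤ s n 1} ∈ 𝒰
    · refine forward_core N φ hhom 𝒰 g U W s hU1 hW1 hW2 hspos hgeq hcoeffU 0 1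
        (fun x d => rfl) (fun d => rfl) (fun n => hsprod n) ?_
      exact hA
    · have hA' : {n | s n 1 ≤ s n 0} ∈ 𝒰 := by
        have hc := (Ultrafilter.compl_mem_iff_notMem).mpr hA
        refine Filter.mem_of_superset hc ?_
        intro n hn
        simp only [Set.mem_compl_iff, Set.mem_setOf_eq, not_le] at hn
        exact hn.le
      refine forward_core N φ hhom 𝒰 g U W s hU1 hW1 hW2 hspos hgeq hcoeffU 1 0
        (fun x d => mul_comm _ _) (fun d => Nat.add_comm _ _) (fun n => by
          rw [mul_comm]; exact hsprod n) ?_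
      exact hA'
  · rintro ⟨L, m, hL0, hL1, hm, hdvd⟩
    -- write L in coordinates
    set a := coeff (Finsupp.single 0 1) L with ha
    set b := coeff (Finsupp.single 1 1) L with hb
    have hLeq : L = C a * X 0 + C b * X 1 := linear_form_eq hL1
    have hab : ¬(a = 0 ∧ b = 0) := by
      rintro ⟨h1, h2⟩
      apply hL0
      rw [hLeq, h1, h2]
      simp
    obtain ⟨g₀, hdet₀, hLX⟩ := substAct_linear a b hab
    rw [← hLeq] at hLX
    -- χ = substAct g₀ φ is divisible by X 0 ^ m
    set χ := substAct g₀ φ with hχ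
    obtain ⟨ρ, hρ⟩ := hdvd
    have hXdvd : (X 0 : MvPolynomial (Fin 2) ℂ) ^ m ∣ χ := by
      refine ⟨substAct g₀ ρ, ?_⟩
      rw [hχ, hρ, substAct_mul, substAct_pow, hLX]
    have hχhom : χ.IsHomogeneous N := substAct_isHomogeneous hhom g₀
    have hsupp : ∀ d ∈ χ.support, m ≤ d 0 := (X_pow_dvd_iff' χ m 0).mp hXdvd
    -- the scaling sequence
    set c : ℕ → ℂ := fun n => (((1 : ℝ)/(n+1) : ℝ) : ℂ) with hc
    have hcne : ∀ n, c n ≠ 0 := by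
      intro n
      simp only [hc, ne_eq, Complex.ofReal_eq_zero, div_eq_zero_iff, one_ne_zero, false_or]
      positivity
    have hc0 : Filter.Tendsto c Filter.atTop (nhds 0) := by
      rw [show (0:ℂ) = ((0:ℝ):ℂ) by simp]
      exact (Complex.continuous_ofReal.tendsto _).comp tendsto_one_div_add_atTop_nhds_zero_nat
    set v : ℕ → Fin 2 → ℂ := fun n => ![c n, (c n)⁻¹] with hv
    set gseq : ℕ → Matrix (Fin 2) (Fin 2) ℂ := fun n => g₀ * Matrix.diagonal (v n) with hg
    have hdetseq : ∀ n, (gseq n).det = 1 := by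
      intro n
      rw [hg, Matrix.det_mul, hdet₀, Matrix.det_diagonal, Fin.prod_univ_two, one_mul]
      show c n * (c n)⁻¹ = 1
      exact mul_inv_cancel₀ (hcne n)
    have hsub : ∀ n, substAct (gseq n) φ = substAct (Matrix.diagonal (v n)) χ := by
      intro n
      rw [hχ, substAct_substAct, hg]
    -- convergence to zero
    have hlim : Filter.Tendsto (fun n => toCoeff (substAct (gseq n) φ))
        Filter.atTop (nhds 0) := by
      rw [tendsto_pi_nhds]
      intro d
      simp only [hsub, toCoeff, coeff_substAct_diagonal, Pi.zero_apply]
      by_cases hd : d ∈ χ.support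
      · have hdN := mem_support_deg hχhom hd
        have hmd := hsupp d hd
        have hd10 : d 1 ≤ d 0 := by omega
        have hpow : ∀ n, v n 0 ^ d 0 * v n 1 ^ d 1 = c n ^ (d 0 - d 1) := by
          intro n
          show c n ^ d 0 * ((c n)⁻¹) ^ d 1 = c n ^ (d 0 - d 1)
          rw [show d 0 = (d 0 - d 1) + d 1 by omega, pow_add, mul_assoc, ← mul_pow,
            mul_inv_cancel₀ (hcne n), one_pow, mul_one]
          congr 1
          omega
        simp only [hpow]
        rw [show (0 : ℂ) = 0 ^ (d 0 - d 1) * coeff d χ by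
          rw [zero_pow (by omega : d 0 - d 1 ≠ 0), zero_mul]]
        exact (hc0.pow _).mul_const _
      · simp only [notMem_support_iff.mp hd, mul_zero]
        exact tendsto_const_nhds
    refine mem_closure_of_tendsto hlim ?_
    filter_upwards with n
    exact ⟨substAct (gseq n) φ, ⟨⟨gseq n, hdetseq n⟩, rfl⟩, rfl⟩
end

section
/- Let N and ℓ be natural numbers with ℓ < N. The function (x, y) ↦ (ℓ − N·(x²+y²)/(1+x²+y²) + (1−(x²+y²))/(1+x²+y²))·(x²+y²)^{ℓ}·2/(1+x²+y²)^{N+2} is integrable on ℝ² with respect to Lebesgue measure, and its integral over ℝ² equals 0. -/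
open MeasureTheory Real Set Filter

private noncomputable def futakiG (N ℓ : ℕ) : ℝ → ℝ :=
  fun s => 2 * (((ℓ : ℝ) + 1) + ((ℓ : ℝ) - N - 1) * s) * s ^ ℓ / (1 + s) ^ (N + 3)

private lemma futakiG_eq (N ℓ : ℕ) {s : ℝ} (hs : 0 ≤ s) :
    ((ℓ : ℝ) - N * s / (1 + s) + (1 - s) / (1 + s)) * s ^ ℓ * 2 / (1 + s) ^ (N + 2)
      = futakiG N ℓ s := by
  have h1 : (0:ℝ) < 1 + s := by linarith
  rw [futakiG, pow_succ (1 + s) (N + 2)]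
  field_simp
  ring

private lemma futakiG_bound (N ℓ : ℕ) (h : ℓ < N) {s : ℝ} (hs : 0 ≤ s) :
    |futakiG N ℓ s| ≤ 2 * (N + 1) / (1 + s) ^ 2 := by
  have h1 : (0:ℝ) < 1 + s := by linarith
  have hc : (ℓ : ℝ) + 1 ≤ (N : ℝ) := by exact_mod_cast h
  have habs : |(((ℓ : ℝ) + 1) + ((ℓ : ℝ) - N - 1) * s)| ≤ ((N : ℝ) + 1) * (1 + s) := by
    rw [abs_le]
    constructor <;> nlinarith [Nat.cast_nonneg (α := ℝ) ℓ, Nat.cast_nonneg (α := ℝ) N]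
  have key : |futakiG N ℓ s| ≤ 2 * (((N : ℝ) + 1) * (1 + s)) * (1 + s) ^ ℓ / (1 + s) ^ (N + 3) := by
    rw [futakiG, abs_div, abs_of_pos (by positivity : (0:ℝ) < (1 + s) ^ (N + 3)),
      abs_mul, abs_mul, abs_two, abs_of_nonneg (by positivity : (0:ℝ) ≤ s ^ ℓ)]
    rw [div_eq_mul_inv, div_eq_mul_inv]
    apply mul_le_mul_of_nonneg_right ?_ (by positivity)
    apply mul_le_mul ?_ (pow_le_pow_left₀ hs (by linarith) ℓ) (by positivity) (by positivity)
    exact mul_le_mul_of_nonneg_left habs (by norm_num)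
  refine key.trans ?_
  rw [div_le_div_iff₀ (by positivity) (by positivity)]
  have hexp : (1 + s) ^ (N + 3) = (1 + s) ^ (ℓ + 1) * (1 + s) ^ (N + 2 - ℓ) := by
    rw [← pow_add]; congr 1; omega
  rw [hexp]
  have h2 : (1 + s) ^ 2 ≤ (1 + s) ^ (N + 2 - ℓ) :=
    pow_le_pow_right₀ (by linarith) (by omega)
  calc 2 * (((N:ℝ) + 1) * (1 + s)) * (1 + s) ^ ℓ * (1 + s) ^ 2
      = (2 * ((N:ℝ) + 1)) * ((1 + s) ^ (ℓ + 1) * (1 + s) ^ 2) := by ring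
    _ ≤ (2 * ((N:ℝ) + 1)) * ((1 + s) ^ (ℓ + 1) * (1 + s) ^ (N + 2 - ℓ)) := by
        gcongr
    _ = 2 * ((N:ℝ) + 1) * ((1 + s) ^ (ℓ + 1) * (1 + s) ^ (N + 2 - ℓ)) := by ring

private lemma futakiH_deriv (N ℓ : ℕ) (x : ℝ) :
    HasDerivAt (fun r : ℝ => (r ^ 2) ^ (ℓ + 1) / (1 + r ^ 2) ^ (N + 2))
      (x * futakiG N ℓ (x ^ 2)) x := by
  have hden : (0:ℝ) < 1 + x ^ 2 := by positivity
  have h1 : HasDerivAt (fun r : ℝ => (r ^ 2) ^ (ℓ + 1))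
      (((ℓ : ℝ) + 1) * (x ^ 2) ^ ℓ * (2 * x)) x := by
    have hb : HasDerivAt (fun r : ℝ => r ^ 2) (2 * x) x := by
      simpa using hasDerivAt_pow 2 x
    have := hb.fun_pow (ℓ + 1)
    simpa [Nat.cast_add, mul_comm, mul_assoc, mul_left_comm] using this
  have h2 : HasDerivAt (fun r : ℝ => (1 + r ^ 2) ^ (N + 2))
      (((N : ℝ) + 2) * (1 + x ^ 2) ^ (N + 1) * (2 * x)) x := by
    have hb : HasDerivAt (fun r : ℝ => 1 + r ^ 2) (2 * x) x := by
      simpa using (hasDerivAt_pow 2 x).const_add 1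
    have := hb.fun_pow (N + 2)
    simpa [Nat.cast_add, mul_comm, mul_assoc, mul_left_comm] using this
  have hd := h1.fun_div h2 (by positivity)
  refine hd.congr_deriv ?_
  rw [futakiG]
  field_simp
  ring

private lemma futakiH_tendsto (N ℓ : ℕ) (h : ℓ < N) :
    Tendsto (fun r : ℝ => (r ^ 2) ^ (ℓ + 1) / (1 + r ^ 2) ^ (N + 2)) atTop (nhds 0) := by
  have hbound : ∀ r : ℝ, (r ^ 2) ^ (ℓ + 1) / (1 + r ^ 2) ^ (N + 2) ≤ (1 + r ^ 2)⁻¹ := by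
    intro r
    have h1 : (0:ℝ) < 1 + r ^ 2 := by positivity
    rw [div_le_iff₀ (by positivity)]
    have hrhs : (1 + r ^ 2)⁻¹ * (1 + r ^ 2) ^ (N + 2) = (1 + r ^ 2) ^ (N + 1) := by
      rw [pow_succ (1 + r ^ 2) (N + 1), mul_comm ((1 + r ^ 2) ^ (N + 1)), ← mul_assoc,
        inv_mul_cancel₀ (ne_of_gt h1), one_mul]
    rw [hrhs]
    calc (r ^ 2) ^ (ℓ + 1) ≤ (1 + r ^ 2) ^ (ℓ + 1) :=
          pow_le_pow_left₀ (by positivity) (by nlinarith [sq_nonneg r]) _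
      _ ≤ (1 + r ^ 2) ^ (N + 1) := pow_le_pow_right₀ (by nlinarith [sq_nonneg r]) (by omega)
  have hnonneg : ∀ r : ℝ, 0 ≤ (r ^ 2) ^ (ℓ + 1) / (1 + r ^ 2) ^ (N + 2) := by
    intro r; positivity
  have hlim : Tendsto (fun r : ℝ => (1 + r ^ 2)⁻¹) atTop (nhds 0) := by
    apply Tendsto.inv_tendsto_atTop
    apply tendsto_atTop_add_const_left
    exact tendsto_pow_atTop two_ne_zero
  exact squeeze_zero hnonneg hbound hlim

private lemma futaki_radial_cont (N ℓ : ℕ) :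
    Continuous (fun r : ℝ => r * futakiG N ℓ (r ^ 2)) := by
  unfold futakiG
  apply Continuous.mul continuous_id
  apply Continuous.div (by fun_prop) (by fun_prop)
  intro r
  positivity

private lemma futaki_radial_integrable (N ℓ : ℕ) (h : ℓ < N) :
    IntegrableOn (fun r : ℝ => r * futakiG N ℓ (r ^ 2)) (Ioi 0) := by
  apply Integrable.mono' (g := fun r : ℝ => (2 * (N + 1)) * (1 + r ^ 2)⁻¹)
  · exact ((integrable_inv_one_add_sq).const_mul _).integrableOn
  · exact (futaki_radial_cont N ℓ).aestronglyMeasurable.restrict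
  · filter_upwards [ae_restrict_mem measurableSet_Ioi] with r (hr : (0:ℝ) < r)
    have hb := futakiG_bound N ℓ h (s := r ^ 2) (by positivity)
    have h1 : (0:ℝ) < 1 + r ^ 2 := by positivity
    rw [norm_mul, Real.norm_eq_abs, Real.norm_eq_abs, abs_of_pos hr]
    calc r * |futakiG N ℓ (r ^ 2)| ≤ r * (2 * (N + 1) / (1 + r ^ 2) ^ 2) := by
          exact mul_le_mul_of_nonneg_left hb hr.le
      _ ≤ (1 + r ^ 2) * (2 * (N + 1) / (1 + r ^ 2) ^ 2) := by
          gcongr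
          nlinarith [sq_nonneg (1 - r)]
      _ = (2 * (N + 1)) * (1 + r ^ 2)⁻¹ := by
          field_simp

private lemma futaki_radial_integral (N ℓ : ℕ) (h : ℓ < N) :
    ∫ r in Ioi (0:ℝ), r * futakiG N ℓ (r ^ 2) = 0 := by
  have hH0 : (((0:ℝ) ^ 2) ^ (ℓ + 1) / (1 + (0:ℝ) ^ 2) ^ (N + 2)) = 0 := by norm_num
  have key := integral_Ioi_of_hasDerivAt_of_tendsto
    (f := fun r : ℝ => (r ^ 2) ^ (ℓ + 1) / (1 + r ^ 2) ^ (N + 2))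
    (f' := fun r : ℝ => r * futakiG N ℓ (r ^ 2)) (a := 0) (m := 0)
    ?_ (fun x _ => futakiH_deriv N ℓ x) (futaki_radial_integrable N ℓ h)
    (futakiH_tendsto N ℓ h)
  · rw [key]; norm_num
  · apply Continuous.continuousWithinAt
    apply Continuous.div (by fun_prop) (by fun_prop)
    intro r; positivity

/-- The vanishing integral over `ℝ²` arising in the evaluation of the Futaki invariant:
`∫_{ℝ²} (ℓ − N s/(1+s) + (1−s)/(1+s)) · s^ℓ · 2/(1+s)^{N+2} dx dy = 0` with `s = x²+y²`,
for `ℓ < N`. -/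
theorem futaki_plane_integral_vanishing (N ℓ : ℕ) (h : ℓ < N) :
    Integrable
      (fun p : ℝ × ℝ =>
        ((ℓ : ℝ) - N * (p.1 ^ 2 + p.2 ^ 2) / (1 + p.1 ^ 2 + p.2 ^ 2) +
            (1 - (p.1 ^ 2 + p.2 ^ 2)) / (1 + p.1 ^ 2 + p.2 ^ 2)) *
          (p.1 ^ 2 + p.2 ^ 2) ^ ℓ * 2 / (1 + p.1 ^ 2 + p.2 ^ 2) ^ (N + 2)) ∧
    ∫ p : ℝ × ℝ,
        ((ℓ : ℝ) - N * (p.1 ^ 2 + p.2 ^ 2) / (1 + p.1 ^ 2 + p.2 ^ 2) +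
            (1 - (p.1 ^ 2 + p.2 ^ 2)) / (1 + p.1 ^ 2 + p.2 ^ 2)) *
          (p.1 ^ 2 + p.2 ^ 2) ^ ℓ * 2 / (1 + p.1 ^ 2 + p.2 ^ 2) ^ (N + 2) = 0 := by
  have hfun : (fun p : ℝ × ℝ =>
        ((ℓ : ℝ) - N * (p.1 ^ 2 + p.2 ^ 2) / (1 + p.1 ^ 2 + p.2 ^ 2) +
            (1 - (p.1 ^ 2 + p.2 ^ 2)) / (1 + p.1 ^ 2 + p.2 ^ 2)) *
          (p.1 ^ 2 + p.2 ^ 2) ^ ℓ * 2 / (1 + p.1 ^ 2 + p.2 ^ 2) ^ (N + 2))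
      = fun p : ℝ × ℝ => futakiG N ℓ (p.1 ^ 2 + p.2 ^ 2) := by
    funext p
    have h0 : (1 : ℝ) + p.1 ^ 2 + p.2 ^ 2 = 1 + (p.1 ^ 2 + p.2 ^ 2) := by ring
    rw [h0]
    exact futakiG_eq N ℓ (by positivity)
  rw [hfun]
  have hcont : Continuous (fun p : ℝ × ℝ => futakiG N ℓ (p.1 ^ 2 + p.2 ^ 2)) := by
    unfold futakiG
    apply Continuous.div (by fun_prop) (by fun_prop)
    intro p; positivity
  have hint : Integrable (fun p : ℝ × ℝ => futakiG N ℓ (p.1 ^ 2 + p.2 ^ 2)) := by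
    apply Integrable.mono'
      (g := fun p : ℝ × ℝ => (8 * (N + 1)) * (1 + ‖p‖) ^ (-(4:ℝ)))
    · apply Integrable.const_mul
      apply integrable_one_add_norm (E := ℝ × ℝ)
      rw [Module.finrank_prod]
      norm_num
    · exact hcont.aestronglyMeasurable
    · filter_upwards with p
      have hs : (0:ℝ) ≤ p.1 ^ 2 + p.2 ^ 2 := by positivity
      have hb := futakiG_bound N ℓ h hs
      have hnn : (0:ℝ) ≤ 1 + ‖p‖ := by positivity
      have hrpow : (1 + ‖p‖) ^ (-(4:ℝ)) = ((1 + ‖p‖) ^ (4:ℕ))⁻¹ := by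
        rw [Real.rpow_neg hnn, show ((4:ℝ)) = ((4:ℕ):ℝ) by norm_num, Real.rpow_natCast]
      have hnorm2 : ‖p‖ ^ 2 ≤ p.1 ^ 2 + p.2 ^ 2 := by
        have hd : ‖p‖ = max |p.1| |p.2| := by
          simp [Prod.norm_def, Real.norm_eq_abs]
        rcases max_cases |p.1| |p.2| with ⟨he, _⟩ | ⟨he, _⟩ <;>
          rw [hd, he] <;> [skip; skip] <;>
          nlinarith [sq_abs p.1, sq_abs p.2, sq_nonneg p.1, sq_nonneg p.2]
      have hnorm : (1 + ‖p‖) ^ (4:ℕ) ≤ 4 * (1 + (p.1 ^ 2 + p.2 ^ 2)) ^ 2 := by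
        have h2 : (1 + ‖p‖) ^ 2 ≤ 2 * (1 + (p.1 ^ 2 + p.2 ^ 2)) := by
          nlinarith [sq_nonneg (1 - ‖p‖), norm_nonneg p]
        calc (1 + ‖p‖) ^ (4:ℕ) = ((1 + ‖p‖) ^ 2) ^ 2 := by ring
          _ ≤ (2 * (1 + (p.1 ^ 2 + p.2 ^ 2))) ^ 2 := by
              apply pow_le_pow_left₀ (by positivity) h2
          _ = 4 * (1 + (p.1 ^ 2 + p.2 ^ 2)) ^ 2 := by ring
      rw [Real.norm_eq_abs, hrpow]
      have h1 : (0:ℝ) < 1 + (p.1 ^ 2 + p.2 ^ 2) := by positivity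
      calc |futakiG N ℓ (p.1 ^ 2 + p.2 ^ 2)| ≤ 2 * (N + 1) / (1 + (p.1 ^ 2 + p.2 ^ 2)) ^ 2 := hb
        _ ≤ (8 * (N + 1)) * ((1 + ‖p‖) ^ (4:ℕ))⁻¹ := by
            rw [show ((8:ℝ) * (N + 1)) * ((1 + ‖p‖) ^ (4:ℕ))⁻¹
                = (8 * (N + 1)) / (1 + ‖p‖) ^ (4:ℕ) from (div_eq_mul_inv _ _).symm,
              div_le_div_iff₀ (by positivity) (by positivity)]
            calc 2 * ((N:ℝ) + 1) * (1 + ‖p‖) ^ (4:ℕ)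
                = 2 * ((N:ℝ) + 1) * (1 + ‖p‖) ^ (4:ℕ) := rfl
              _ ≤ 2 * ((N:ℝ) + 1) * (4 * (1 + (p.1 ^ 2 + p.2 ^ 2)) ^ 2) :=
                  mul_le_mul_of_nonneg_left hnorm (by positivity)
              _ = 8 * ((N:ℝ) + 1) * (1 + (p.1 ^ 2 + p.2 ^ 2)) ^ 2 := by ring
  refine ⟨hint, ?_⟩
  have harg : ∀ p : ℝ × ℝ, (p.1 * Real.cos p.2) ^ 2 + (p.1 * Real.sin p.2) ^ 2 = p.1 ^ 2 := by
    intro p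
    rw [mul_pow, mul_pow, ← mul_add, Real.cos_sq_add_sin_sq, mul_one]
  have hpolar := integral_comp_polarCoord_symm (fun p : ℝ × ℝ => futakiG N ℓ (p.1 ^ 2 + p.2 ^ 2))
  rw [← hpolar]
  simp only [polarCoord_symm_apply, smul_eq_mul, polarCoord_target]
  simp_rw [harg]
  have h2 : ∫ p in Ioi (0:ℝ) ×ˢ Ioo (-π) π,
      (fun r : ℝ => r * futakiG N ℓ (r ^ 2)) p.1 * (fun _ : ℝ => (1:ℝ)) p.2
        ∂((volume : Measure ℝ).prod volume)
      = (∫ r in Ioi (0:ℝ), r * futakiG N ℓ (r ^ 2)) * ∫ _ in Ioo (-π) π, (1:ℝ) :=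
    setIntegral_prod_mul (μ := volume) (ν := volume)
      (fun r : ℝ => r * futakiG N ℓ (r ^ 2)) (fun _ : ℝ => (1:ℝ)) (Ioi 0) (Ioo (-π) π)
  calc ∫ p in Ioi (0:ℝ) ×ˢ Ioo (-π) π, p.1 * futakiG N ℓ (p.1 ^ 2)
      = ∫ p in Ioi (0:ℝ) ×ˢ Ioo (-π) π,
          (fun r : ℝ => r * futakiG N ℓ (r ^ 2)) p.1 * (fun _ : ℝ => (1:ℝ)) p.2
            ∂((volume : Measure ℝ).prod volume) := by
        rw [← Measure.volume_eq_prod]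
        simp
    _ = (∫ r in Ioi (0:ℝ), r * futakiG N ℓ (r ^ 2)) * ∫ _ in Ioo (-π) π, (1:ℝ) := h2
    _ = 0 := by rw [futaki_radial_integral N ℓ h, zero_mul]
end
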